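/- For the boundary operator Δ on a graded free ℤ-module with C_0 = ℤ⟨z_1⟩ ⊕ ℤ⟨z_2⟩, C_1 = ℤ⟨y_1⟩ ⊕ ℤ⟨y_2⟩ ⊕ ℤ⟨y_3⟩, C_2 = ℤ⟨x_1⟩ ⊕ ℤ⟨x_2⟩ ⊕ ℤ⟨x_3⟩, given by Δx_1 = -y_2, Δx_2 = y_1 + y_2, Δx_3 = -y_1, Δy_1 = Δy_2 = 0, Δy_3 = z_2 - z_1, one has Δ∘Δ = 0, and H_0 ≅ ℤ, H_1 = 0, H_2 ≅ ℤ. -/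

import Mathlib

/-- The GS-boundary operator of the Whitney example (with `C₀ = ℤ⟨z₁,z₂⟩`,
`C₁ = ℤ⟨y₁,y₂,y₃⟩`, `C₂ = ℤ⟨x₁,x₂,x₃⟩`) squares to zero and has homology
`H₀ ≅ ℤ`, `H₁ = 0`, `H₂ ≅ ℤ`. -/
theorem stmt_5
    (d₂ : (Fin 3 → ℤ) →ₗ[ℤ] (Fin 3 → ℤ)) (d₁ : (Fin 3 → ℤ) →ₗ[ℤ] (Fin 2 → ℤ))
    -- Δx₁ = -y₂, Δx₂ = y₁ + y₂, Δx₃ = -y₁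
    (hd₂ : d₂ = Matrix.toLin' !![0, 1, -1; -1, 1, 0; 0, 0, 0])
    -- Δy₁ = 0, Δy₂ = 0, Δy₃ = z₂ - z₁
    (hd₁ : d₁ = Matrix.toLin' !![0, 0, -1; 0, 0, 1]) :
    d₁ ∘ₗ d₂ = 0 ∧
      Nonempty (((Fin 2 → ℤ) ⧸ LinearMap.range d₁) ≃ₗ[ℤ] ℤ) ∧
      Subsingleton (↥(LinearMap.ker d₁) ⧸
        (LinearMap.range d₂).comap (LinearMap.ker d₁).subtype) ∧
      Nonempty (↥(LinearMap.ker d₂) ≃ₗ[ℤ] ℤ) := by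
  have happ₂ : ∀ v : Fin 3 → ℤ, d₂ v = ![v 1 - v 2, v 1 - v 0, 0] := by
    intro v
    rw [hd₂]
    simp [Matrix.toLin'_apply, Matrix.mulVec, dotProduct, Fin.sum_univ_succ]
    constructor <;> ring
  have happ₁ : ∀ v : Fin 3 → ℤ, d₁ v = ![-v 2, v 2] := by
    intro v
    rw [hd₁]
    simp [Matrix.toLin'_apply, Matrix.mulVec, dotProduct, Fin.sum_univ_succ]
  refine ⟨?_, ⟨?_⟩, ?_, ⟨?_⟩⟩
  · ext v i
    fin_cases i <;> simp [happ₂, happ₁]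
  · -- H₀ ≅ ℤ via v ↦ v 0 + v 1
    let f : (Fin 2 → ℤ) →ₗ[ℤ] ℤ :=
      { toFun := fun v => v 0 + v 1
        map_add' := fun a b => by simp [Pi.add_apply]; ring
        map_smul' := fun c a => by simp [Pi.smul_apply]; ring }
    have hker : LinearMap.range d₁ = LinearMap.ker f := by
      ext v
      constructor
      · rintro ⟨w, rfl⟩
        simp [happ₁, f]
      · intro hv
        simp only [LinearMap.mem_ker] at hv
        refine ⟨![0, 0, v 1], ?_⟩
        rw [happ₁]
        have h0 : v 0 = -v 1 := by
          have : v 0 + v 1 = 0 := hv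
          linarith
        ext i; fin_cases i <;> simp [h0]
    have hsurj : Function.Surjective f := fun n => ⟨![n, 0], by simp [f]⟩
    exact (Submodule.quotEquivOfEq _ _ hker).trans (f.quotKerEquivOfSurjective hsurj)
  · -- H₁ = 0
    rw [Submodule.Quotient.subsingleton_iff]
    rw [eq_top_iff]
    rintro ⟨v, hv⟩ -
    simp only [Submodule.mem_comap, Submodule.subtype_apply, LinearMap.mem_range]
    have hv2 : v 2 = 0 := by
      have := hv
      rw [LinearMap.mem_ker, happ₁] at this
      have h := congrFun this 1
      simpa using h
    refine ⟨![-v 1, 0, -v 0], ?_⟩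
    rw [happ₂]
    ext i; fin_cases i <;> simp [hv2]
  · -- H₂ ≅ ℤ
    refine
      { toFun := fun v => v.1 0
        map_add' := fun a b => rfl
        map_smul' := fun c a => rfl
        invFun := fun t => ⟨![t, t, t], by
          rw [LinearMap.mem_ker, happ₂]
          ext i; fin_cases i <;> simp⟩
        left_inv := ?_
        right_inv := fun t => rfl }
    rintro ⟨v, hv⟩
    rw [LinearMap.mem_ker, happ₂] at hv
    have h0 : v 1 - v 2 = 0 := by simpa using congrFun hv 0
    have h1 : v 1 - v 0 = 0 := by simpa using congrFun hv 1
    apply Subtype.ext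
    ext i; fin_cases i <;> simp <;> omega
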